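/- Let P be a probability measure, X a P-integrable real random variable, ε ∈ [0,1) and b ∈ ℝ. If CVaR_P^ε[X] ≤ b, then P(X ≤ b) ≥ ε. -/

import Mathlib

open MeasureTheory

/-- Conditional Value at Risk at level `ε` of the random variable `X` under `P`. -/
noncomputable def cvar {Ω : Type*} [MeasurableSpace Ω] (P : Measure Ω) (ε : ℝ) (X : Ω → ℝ) : ℝ :=
  ⨅ t : ℝ, (t + (1 / (1 - ε)) * ∫ a, max (X a - t) 0 ∂P)

/-- Conservative approximation of chance constraints by the CVaR criterion:
if `CVaR_P^ε[X] ≤ b` then `P(X ≤ b) ≥ ε`. -/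
theorem cvar_le_imp_chance_constraint {Ω : Type*} [MeasurableSpace Ω]
    (P : Measure Ω) [IsProbabilityMeasure P] (X : Ω → ℝ) (hX : Integrable X P)
    (ε : ℝ) (hε : ε ∈ Set.Ico (0 : ℝ) 1) (b : ℝ)
    (hcvar : cvar P ε X ≤ b) :
    ENNReal.ofReal ε ≤ P {a | X a ≤ b} := by
  by_contra hcon
  push_neg at hcon
  obtain ⟨hε0, hε1⟩ := hε
  have h1ε : (0:ℝ) < 1 - ε := by linarith
  -- measurable representative
  have haesm := hX.1
  set g : Ω → ℝ := haesm.mk X with hgdef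
  have hgm : Measurable g := haesm.measurable_mk
  have hXg : X =ᵐ[P] g := haesm.ae_eq_mk
  have hgint : Integrable g P := hX.congr hXg
  have hsets : P {a | X a ≤ b} = P {a | g a ≤ b} :=
    measure_congr (hXg.mono fun a ha => by
      change (X a ≤ b) = (g a ≤ b); rw [ha])
  rw [hsets] at hcon
  set S : Set Ω := {a | b < g a} with hSdef
  have hS : MeasurableSet S := measurableSet_lt measurable_const hgm
  have hScompl : Sᶜ = {a | g a ≤ b} := by ext a; simp [hSdef, not_lt]
  have hPle : (P {a | g a ≤ b}).toReal < ε := by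
    have h := ENNReal.toReal_lt_toReal (measure_ne_top P _) ENNReal.ofReal_ne_top |>.mpr hcon
    rwa [ENNReal.toReal_ofReal hε0] at h
  set p : ℝ := (P S).toReal with hpdef
  have hsum : p + (P {a | g a ≤ b}).toReal = 1 := by
    have h : P S + P {a | g a ≤ b} = 1 := by
      rw [← hScompl, measure_add_measure_compl hS, measure_univ]
    have := congrArg ENNReal.toReal h
    rwa [ENNReal.toReal_add (measure_ne_top P _) (measure_ne_top P _), ENNReal.toReal_one] at this
  have hp : 1 - ε < p := by linarith
  have hp0 : 0 < p := by linarith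
  -- m := ∫ (g - b)⁺ > 0
  set m : ℝ := ∫ a, max (g a - b) 0 ∂P with hmdef
  have hmint : Integrable (fun a => max (g a - b) 0) P := (hgint.sub (integrable_const b)).pos_part
  have hm : 0 < m := by
    have hnn : 0 ≤ (fun a => max (g a - b) 0) := fun a => le_max_right _ _
    rw [hmdef, integral_pos_iff_support_of_nonneg hnn hmint]
    have hsupp : Function.support (fun a => max (g a - b) 0) = S := by
      ext a
      simp only [Function.mem_support, hSdef, Set.mem_setOf_eq, ne_eq]
      constructor
      · intro h
        by_contra hc
        push_neg at hc
        exact h (max_eq_right (by linarith))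
      · intro h
        have : max (g a - b) 0 = g a - b := max_eq_left (by linarith)
        rw [this]; intro h'; linarith
    rw [hsupp]
    have : P S ≠ 0 := by
      intro h0
      rw [hpdef, h0] at hp0
      simp at hp0
    exact pos_iff_ne_zero.mpr this
  set γ : ℝ := min (m/2) (m/(2*(1-ε))) with hγdef
  have hγ : 0 < γ := lt_min (by positivity) (by positivity)
  have hγ1 : γ ≤ m/2 := min_le_left _ _
  have hγ2 : γ ≤ m/(2*(1-ε)) := min_le_right _ _
  have hγ2' : γ * (2*(1-ε)) ≤ m := (le_div_iff₀ (by positivity)).mp hγ2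
  -- key uniform lower bound
  have hkey : ∀ t : ℝ, b + γ ≤ t + (1/(1-ε)) * ∫ a, max (g a - t) 0 ∂P := by
    intro t
    have hItint : Integrable (fun a => max (g a - t) 0) P :=
      (hgint.sub (integrable_const t)).pos_part
    have hIt_nonneg : 0 ≤ ∫ a, max (g a - t) 0 ∂P :=
      integral_nonneg fun a => le_max_right _ _
    by_cases ht : t ≤ b
    · -- I t ≥ m + (b - t) * p
      have hbound : m + (b - t) * p ≤ ∫ a, max (g a - t) 0 ∂P := by
        have hind : Integrable (S.indicator (fun _ => (b - t : ℝ))) P :=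
          (integrable_const (b - t)).indicator hS
        have hint2 : Integrable (fun a => max (g a - b) 0 + S.indicator (fun _ => (b - t : ℝ)) a) P :=
          hmint.add hind
        have hle : ∀ a, max (g a - b) 0 + S.indicator (fun _ => (b - t : ℝ)) a ≤ max (g a - t) 0 := by
          intro a
          by_cases hga : a ∈ S
          · have hga' : b < g a := hga
            rw [Set.indicator_of_mem hga]
            have h1 : max (g a - b) 0 = g a - b := max_eq_left (by linarith)
            have h2 : max (g a - t) 0 = g a - t := max_eq_left (by linarith)
            rw [h1, h2]; ring_nf; exact le_refl _
          · have hga' : g a ≤ b := by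
              simp only [hSdef, Set.mem_setOf_eq, not_lt] at hga; exact hga
            rw [Set.indicator_of_notMem hga]
            have h1 : max (g a - b) 0 = 0 := max_eq_right (by linarith)
            rw [h1, add_zero]
            exact le_max_right _ _
        have heq : m + (b - t) * p =
            ∫ a, (max (g a - b) 0 + S.indicator (fun _ => (b - t : ℝ)) a) ∂P := by
          rw [integral_add hmint hind, integral_indicator hS, setIntegral_const, smul_eq_mul, measureReal_def,
            hmdef, hpdef]
          ring
        rw [heq]
        exact integral_mono hint2 hItint hle
      have h1 : (b - t) * (1 - ε) ≤ (b - t) * p :=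
        mul_le_mul_of_nonneg_left hp.le (by linarith)
      have key : (b + γ - t) * (1 - ε) ≤ m + (b - t) * p := by nlinarith
      have key2 : b + γ - t ≤ (m + (b - t) * p) / (1 - ε) := (le_div_iff₀ h1ε).mpr key
      have key3 : (m + (b - t) * p) / (1 - ε) = 1/(1-ε) * (m + (b - t) * p) := by ring
      have key4 : 1/(1-ε) * (m + (b - t) * p) ≤ 1/(1-ε) * ∫ a, max (g a - t) 0 ∂P :=
        mul_le_mul_of_nonneg_left hbound (by positivity)
      linarith
    · push_neg at ht
      by_cases ht2 : b + m/2 ≤ t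
      · have hnn : 0 ≤ 1/(1-ε) * ∫ a, max (g a - t) 0 ∂P :=
          mul_nonneg (by positivity) hIt_nonneg
        linarith
      · push_neg at ht2
        have hbound : m - (t - b) ≤ ∫ a, max (g a - t) 0 ∂P := by
          have hint2 : Integrable (fun a => max (g a - b) 0 - (t - b)) P :=
            hmint.sub (integrable_const _)
          have hle : ∀ a, max (g a - b) 0 - (t - b) ≤ max (g a - t) 0 := by
            intro a
            rcases le_or_gt (g a) t with h | h
            · have h1 : max (g a - b) 0 ≤ t - b := max_le (by linarith) (by linarith)
              have h2 : (0:ℝ) ≤ max (g a - t) 0 := le_max_right _ _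
              linarith
            · have h1 : max (g a - b) 0 = g a - b := max_eq_left (by linarith)
              have h2 : max (g a - t) 0 = g a - t := max_eq_left (by linarith)
              rw [h1, h2]; linarith
          have heq : m - (t - b) = ∫ a, (max (g a - b) 0 - (t - b)) ∂P := by
            rw [integral_sub hmint (integrable_const _), integral_const]
            simp [hmdef]
          rw [heq]
          exact integral_mono hint2 hItint hle
        have key : γ * (1 - ε) ≤ m - (t - b) := by nlinarith
        have key2 : γ ≤ (m - (t - b)) / (1 - ε) := (le_div_iff₀ h1ε).mpr key
        have key3 : (m - (t - b)) / (1 - ε) = 1/(1-ε) * (m - (t - b)) := by ring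
        have key4 : 1/(1-ε) * (m - (t - b)) ≤ 1/(1-ε) * ∫ a, max (g a - t) 0 ∂P :=
          mul_le_mul_of_nonneg_left hbound (by positivity)
        linarith
  -- conclude
  have hc : b + γ ≤ cvar P ε X := by
    rw [cvar]
    apply le_ciInf
    intro t
    have : ∫ a, max (X a - t) 0 ∂P = ∫ a, max (g a - t) 0 ∂P :=
      integral_congr_ae (hXg.mono fun a ha => by dsimp only; rw [ha])
    rw [this]
    exact hkey t
  linarith
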